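/- Let $X$ and $Y$ be finite-dimensional normed vector spaces, and let $T$ be a weakly continuous multivalued map with $T(x) \neq \varnothing$ for all $x \in X$. Then the set $\mathrm{dmn}\,DT$ of points where $T$ is strongly differentiable is a Borel subset of $X$, and the derivative map $DT : \mathrm{dmn}\,DT \to \mathrm{Hom}(X,Y)$ is Borel measurable. -/

import Mathlib

open scoped Pointwise
open Filter Topology

/-- `T` is strongly differentiable at `x` with derivative `L`. -/
def StrongDiffAt {X Y : Type*} [NormedAddCommGroup X] [NormedSpace ℝ X]
    [NormedAddCommGroup Y] [NormedSpace ℝ Y]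
    (T : X → Set Y) (x : X) (L : X →L[ℝ] Y) : Prop :=
  (∃ z : Y, T x = {z}) ∧
  ∀ ε : ℝ, 0 < ε → ∃ δ : ℝ, 0 < δ ∧ ∀ y : X, ‖y - x‖ < δ →
    ∀ w ∈ T y, ∀ z ∈ T x, ‖w - z - L (y - x)‖ ≤ ε * ‖y - x‖

section Aux

variable {X Y : Type*} [NormedAddCommGroup X] [NormedSpace ℝ X]
    [NormedAddCommGroup Y] [NormedSpace ℝ Y]

/-- The basic approximation set. -/
def SDSet (T : X → Set Y) (L : X →L[ℝ] Y) (δ c : ℝ) : Set X :=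
  {x | ∀ y : X, ‖y - x‖ < δ → ∀ w ∈ T y, ∀ z ∈ T x,
    ‖w - z - L (y - x)‖ ≤ c * ‖y - x‖}

lemma isClosed_SDSet (T : X → Set Y) (hne : ∀ x, (T x).Nonempty)
    (L : X →L[ℝ] Y) (δ c : ℝ) (hc : 0 ≤ c) : IsClosed (SDSet T L δ c) := by
  apply isClosed_of_closure_subset
  intro x hx y hy w hw z hz
  refine le_of_forall_pos_le_add (fun η hη => ?_)
  have hσpos : 0 < min (δ - ‖y - x‖) (η / (2 * c + 1)) := lt_min (by linarith) (by positivity)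
  obtain ⟨x', hx'S, hxx'⟩ := Metric.mem_closure_iff.1 hx _ hσpos
  rw [dist_eq_norm] at hxx'
  have hσ1 : ‖x - x'‖ < δ - ‖y - x‖ := lt_of_lt_of_le hxx' (min_le_left _ _)
  have hσ2 : ‖x - x'‖ < η / (2 * c + 1) := lt_of_lt_of_le hxx' (min_le_right _ _)
  have hyx' : ‖y - x'‖ < δ := by
    calc ‖y - x'‖ ≤ ‖y - x‖ + ‖x - x'‖ := by
          simpa using norm_add_le (y - x) (x - x')
    _ < δ := by linarith [norm_nonneg (y - x)]
  have hxx'δ : ‖x - x'‖ < δ := by linarith [norm_nonneg (y - x)]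
  obtain ⟨z', hz'⟩ := hne x'
  have e1 := hx'S y hyx' w hw z' hz'
  have e2 := hx'S x hxx'δ z hz z' hz'
  have hdecomp : w - z - L (y - x) = (w - z' - L (y - x')) - (z - z' - L (x - x')) := by
    simp only [map_sub]; abel
  calc ‖w - z - L (y - x)‖ ≤ ‖w - z' - L (y - x')‖ + ‖z - z' - L (x - x')‖ := by
        rw [hdecomp]; exact norm_sub_le _ _
  _ ≤ c * ‖y - x'‖ + c * ‖x - x'‖ := add_le_add e1 e2
  _ ≤ c * (‖y - x‖ + ‖x - x'‖) + c * ‖x - x'‖ := by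
        have : ‖y - x'‖ ≤ ‖y - x‖ + ‖x - x'‖ := by simpa using norm_add_le (y - x) (x - x')
        nlinarith
  _ ≤ c * ‖y - x‖ + η := by nlinarith [norm_nonneg (x - x'),
        (lt_div_iff₀ (by positivity : (0:ℝ) < 2 * c + 1)).1 hσ2]

/-- Two approximating maps at the same point are close in operator norm. -/
lemma SDSet.norm_sub_le (T : X → Set Y) (hne : ∀ x, (T x).Nonempty)
    {x : X} {L₁ L₂ : X →L[ℝ] Y} {δ₁ δ₂ c₁ c₂ : ℝ} (hδ₁ : 0 < δ₁) (hδ₂ : 0 < δ₂)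
    (hc₁ : 0 ≤ c₁) (hc₂ : 0 ≤ c₂)
    (h₁ : x ∈ SDSet T L₁ δ₁ c₁) (h₂ : x ∈ SDSet T L₂ δ₂ c₂) : ‖L₁ - L₂‖ ≤ c₁ + c₂ := by
  refine ContinuousLinearMap.opNorm_le_bound _ (by positivity) (fun v => ?_)
  obtain ⟨z, hz⟩ := hne x
  set t : ℝ := min δ₁ δ₂ / (2 * (‖v‖ + 1)) with ht
  have htpos : 0 < t := by positivity
  set y : X := x + t • v with hy
  have hyx : y - x = t • v := by simp [hy]
  have hnorm : ‖y - x‖ = t * ‖v‖ := by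
    rw [hyx, norm_smul, Real.norm_eq_abs, abs_of_pos htpos]
  have hsmall : ‖y - x‖ < min δ₁ δ₂ := by
    rw [hnorm, ht, div_mul_eq_mul_div, div_lt_iff₀ (by positivity)]
    have h1 : 0 < min δ₁ δ₂ := lt_min hδ₁ hδ₂
    nlinarith [norm_nonneg v]
  obtain ⟨w, hw⟩ := hne y
  have e1 := h₁ y (lt_of_lt_of_le hsmall (min_le_left _ _)) w hw z hz
  have e2 := h₂ y (lt_of_lt_of_le hsmall (min_le_right _ _)) w hw z hz
  have hdecomp : (L₁ - L₂) (y - x) = (w - z - L₂ (y - x)) - (w - z - L₁ (y - x)) := by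
    simp only [ContinuousLinearMap.sub_apply]; abel
  have key : ‖(L₁ - L₂) (y - x)‖ ≤ (c₁ + c₂) * ‖y - x‖ := by
    rw [hdecomp]
    calc ‖(w - z - L₂ (y - x)) - (w - z - L₁ (y - x))‖
        ≤ ‖w - z - L₂ (y - x)‖ + ‖w - z - L₁ (y - x)‖ := _root_.norm_sub_le _ _
    _ ≤ c₂ * ‖y - x‖ + c₁ * ‖y - x‖ := add_le_add e2 e1
    _ = (c₁ + c₂) * ‖y - x‖ := by ring
  rw [hyx, map_smul] at key
  simp only [norm_smul, Real.norm_eq_abs, abs_of_pos htpos] at key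
  have hring : (c₁ + c₂) * (t * ‖v‖) = t * ((c₁ + c₂) * ‖v‖) := by ring
  rw [hring] at key
  exact le_of_mul_le_mul_left key htpos

/-- If `x ∈ SDSet T L δ c` and `T` is strongly differentiable at `x` with derivative `L'`,
then `‖L - L'‖ ≤ c`. -/
lemma norm_sub_le_of_mem_SDSet (T : X → Set Y) (hne : ∀ x, (T x).Nonempty)
    {x : X} {L L' : X →L[ℝ] Y} {δ c : ℝ} (hδ : 0 < δ) (hc : 0 ≤ c)
    (hx : x ∈ SDSet T L δ c) (hd : StrongDiffAt T x L') : ‖L - L'‖ ≤ c := by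
  refine le_of_forall_pos_le_add (fun ε hε => ?_)
  obtain ⟨δ', hδ', hcond⟩ := hd.2 ε hε
  exact SDSet.norm_sub_le T hne hδ hδ' hc hε.le hx hcond

end Aux

/-- The domain of strong differentiability of a weakly continuous multivalued map is
Borel, and the derivative map is Borel measurable on it. -/
theorem strong_differentiability_domain_and_derivative_measurable
    {X Y : Type*} [NormedAddCommGroup X] [NormedSpace ℝ X] [FiniteDimensional ℝ X]
    [MeasurableSpace X] [BorelSpace X]
    [NormedAddCommGroup Y] [NormedSpace ℝ Y] [FiniteDimensional ℝ Y]
    [MeasurableSpace (X →L[ℝ] Y)] [BorelSpace (X →L[ℝ] Y)]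
    (T : X → Set Y) (hne : ∀ x, (T x).Nonempty)
    (hwc : ∀ x : X, ∀ ε : ℝ, 0 < ε → ∃ δ : ℝ, 0 < δ ∧ ∀ y : X, ‖y - x‖ < δ →
      T y ⊆ T x + {v : Y | ‖v‖ < ε}) :
    MeasurableSet {x : X | ∃ L : X →L[ℝ] Y, StrongDiffAt T x L} ∧
    ∀ D : X → (X →L[ℝ] Y),
      (∀ x : X, (∃ L : X →L[ℝ] Y, StrongDiffAt T x L) → StrongDiffAt T x (D x)) →
      ∀ B : Set (X →L[ℝ] Y), MeasurableSet B →
        MeasurableSet {x : X | (∃ L : X →L[ℝ] Y, StrongDiffAt T x L) ∧ D x ∈ B} := by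
  classical
  haveI : CompleteSpace Y := FiniteDimensional.complete ℝ Y
  haveI : Nonempty (X →L[ℝ] Y) := ⟨0⟩
  obtain ⟨d, hd⟩ := TopologicalSpace.exists_dense_seq (X →L[ℝ] Y)
  set S : ℕ → ℕ → ℕ → Set X := fun k m n =>
    SDSet T (d k) (1 / (m + 1 : ℝ)) (1 / (n + 1 : ℝ)) with hSdef
  have hSmeas : ∀ k m n, MeasurableSet (S k m n) := fun k m n =>
    (isClosed_SDSet T hne _ _ _ (by positivity)).measurableSet
  set A : Set X := {x : X | ∃ L : X →L[ℝ] Y, StrongDiffAt T x L} with hAdef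
  have hAeq : A = ⋂ n, ⋃ k, ⋃ m, S k m n := by
    ext x
    simp only [hAdef, Set.mem_setOf_eq, Set.mem_iInter, Set.mem_iUnion]
    constructor
    · rintro ⟨L, hL⟩ n
      obtain ⟨δ, hδ, hcond⟩ := hL.2 (1 / (2 * (n + 1 : ℝ))) (by positivity)
      obtain ⟨m, hm⟩ := exists_nat_one_div_lt hδ
      obtain ⟨k, hk⟩ := hd.exists_dist_lt L (by positivity : (0:ℝ) < 1 / (2 * (n + 1 : ℝ)))
      refine ⟨k, m, fun y hy w hw z hz => ?_⟩
      have hy' : ‖y - x‖ < δ := lt_trans hy hm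
      have h1 := hcond y hy' w hw z hz
      have hdk : ‖L - d k‖ < 1 / (2 * (n + 1 : ℝ)) := by
        rw [norm_sub_rev, ← dist_eq_norm']; exact hk
      have hdecomp : w - z - d k (y - x) = (w - z - L (y - x)) + (L - d k) (y - x) := by
        simp only [ContinuousLinearMap.sub_apply]; abel
      calc ‖w - z - d k (y - x)‖
          ≤ ‖w - z - L (y - x)‖ + ‖(L - d k) (y - x)‖ := by
            rw [hdecomp]; exact norm_add_le _ _
      _ ≤ 1 / (2 * (n + 1 : ℝ)) * ‖y - x‖ + ‖L - d k‖ * ‖y - x‖ :=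
            add_le_add h1 (ContinuousLinearMap.le_opNorm _ _)
      _ ≤ 1 / (n + 1 : ℝ) * ‖y - x‖ := by
            have h2 : ‖L - d k‖ * ‖y - x‖ ≤ 1 / (2 * (n + 1 : ℝ)) * ‖y - x‖ :=
              mul_le_mul_of_nonneg_right hdk.le (norm_nonneg _)
            have h3 : 1 / (2 * (n + 1 : ℝ)) + 1 / (2 * (n + 1 : ℝ)) = 1 / (n + 1 : ℝ) := by
              rw [← add_div, div_eq_div_iff (by positivity) (by positivity)]
              ring
            nlinarith [norm_nonneg (y - x)]
    · intro hx
      choose k m hk using hx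
      obtain ⟨z₀, hz₀⟩ := hne x
      have hsing : T x = {z₀} := by
        refine Set.eq_singleton_iff_unique_mem.2 ⟨hz₀, fun w hw => ?_⟩
        have h0 := hk 0 x (by simp only [sub_self, norm_zero]; positivity) w hw z₀ hz₀
        simp only [sub_self, map_zero, norm_zero, mul_zero, sub_zero] at h0
        exact sub_eq_zero.1 (norm_le_zero_iff.1 h0)
      have key : ∀ n p : ℕ, ‖d (k n) - d (k p)‖ ≤ 1 / (n + 1 : ℝ) + 1 / (p + 1 : ℝ) :=
        fun n p => SDSet.norm_sub_le T hne (by positivity) (by positivity)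
          (by positivity) (by positivity) (hk n) (hk p)
      have hb0 : Tendsto (fun n : ℕ => 1 / (n + 1 : ℝ)) atTop (𝓝 0) :=
        tendsto_one_div_add_atTop_nhds_zero_nat
      have hcauchy : CauchySeq (fun n => d (k n)) := by
        refine cauchySeq_of_le_tendsto_0 (fun N => 2 / (N + 1 : ℝ)) (fun n p N hn hp => ?_) ?_
        · rw [dist_eq_norm]
          have h1 : 1 / (n + 1 : ℝ) ≤ 1 / (N + 1 : ℝ) := by
            apply one_div_le_one_div_of_le (by positivity)
            exact_mod_cast by omega
          have h2 : 1 / (p + 1 : ℝ) ≤ 1 / (N + 1 : ℝ) := by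
            apply one_div_le_one_div_of_le (by positivity)
            exact_mod_cast by omega
          calc ‖d (k n) - d (k p)‖ ≤ 1 / (n + 1 : ℝ) + 1 / (p + 1 : ℝ) := key n p
          _ ≤ 2 / (N + 1 : ℝ) := by
                have : (2:ℝ) / (N + 1) = 1 / (N + 1) + 1 / (N + 1) := by ring
                linarith
        · have := hb0.const_mul (2 : ℝ)
          simpa [mul_one_div, div_eq_mul_inv] using this
      obtain ⟨L, hL⟩ := cauchySeq_tendsto_of_complete hcauchy
      have hbound : ∀ n, ‖d (k n) - L‖ ≤ 1 / (n + 1 : ℝ) := by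
        intro n
        have h1 : Tendsto (fun p => ‖d (k n) - d (k p)‖) atTop (𝓝 ‖d (k n) - L‖) :=
          (tendsto_const_nhds.sub hL).norm
        have h2 : Tendsto (fun p : ℕ => 1 / (n + 1 : ℝ) + 1 / (p + 1 : ℝ)) atTop
            (𝓝 (1 / (n + 1 : ℝ) + 0)) := tendsto_const_nhds.add hb0
        simpa using le_of_tendsto_of_tendsto' h1 h2 (fun p => key n p)
      refine ⟨L, ⟨z₀, hsing⟩, fun ε hε => ?_⟩
      obtain ⟨n, hn⟩ := exists_nat_gt (2 / ε)
      have hn1 : 2 / (n + 1 : ℝ) < ε := by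
        rw [div_lt_iff₀ (by positivity)]
        rw [div_lt_iff₀ hε] at hn
        nlinarith
      refine ⟨1 / (m n + 1 : ℝ), by positivity, fun y hy w hw z hz => ?_⟩
      have h1 := hk n y hy w hw z hz
      have hdecomp : w - z - L (y - x) = (w - z - d (k n) (y - x)) + (d (k n) - L) (y - x) := by
        simp only [ContinuousLinearMap.sub_apply]; abel
      calc ‖w - z - L (y - x)‖
          ≤ ‖w - z - d (k n) (y - x)‖ + ‖(d (k n) - L) (y - x)‖ := by
            rw [hdecomp]; exact norm_add_le _ _
      _ ≤ 1 / (n + 1 : ℝ) * ‖y - x‖ + ‖d (k n) - L‖ * ‖y - x‖ :=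
            add_le_add h1 (ContinuousLinearMap.le_opNorm _ _)
      _ ≤ ε * ‖y - x‖ := by
            have h2 : ‖d (k n) - L‖ * ‖y - x‖ ≤ 1 / (n + 1 : ℝ) * ‖y - x‖ :=
              mul_le_mul_of_nonneg_right (hbound n) (norm_nonneg _)
            have h3 : 1 / (n + 1 : ℝ) + 1 / (n + 1 : ℝ) = 2 / (n + 1 : ℝ) := by ring
            nlinarith [norm_nonneg (y - x)]
  have hAmeas : MeasurableSet A := by
    rw [hAeq]
    exact MeasurableSet.iInter fun n => MeasurableSet.iUnion fun k =>
      MeasurableSet.iUnion fun m => hSmeas k m n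
  refine ⟨hAmeas, fun D hD B hB => ?_⟩
  set P : ℕ → X → ℕ → Prop := fun n x j => x ∈ S (Nat.unpair j).1 (Nat.unpair j).2 n with hPdef
  have hPmeas : ∀ n j, MeasurableSet {x | P n x j} := fun n j => hSmeas _ _ n
  have hexists : ∀ x ∈ A, ∀ n : ℕ, ∃ j : ℕ, P n x j := by
    intro x hx n
    rw [hAeq] at hx
    simp only [Set.mem_iInter, Set.mem_iUnion] at hx
    obtain ⟨kk, mm, h⟩ := hx n
    exact ⟨Nat.pair kk mm, by simpa [hPdef, Nat.unpair_pair] using h⟩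
  set g : ℕ → X → ℕ := fun n x => if h : ∃ j, P n x j then Nat.find h else 0 with hgdef
  have hgmeas : ∀ n, Measurable (g n) := by
    intro n
    apply measurable_to_countable'
    intro j
    have heq : g n ⁻¹' {j} =
        ({x | P n x j} ∩ ⋂ i ∈ Set.Iio j, {x | P n x i}ᶜ) ∪
        ({_x : X | j = 0} ∩ ⋂ i : ℕ, {x | P n x i}ᶜ) := by
      ext x
      simp only [Set.mem_preimage, Set.mem_singleton_iff, Set.mem_union, Set.mem_inter_iff,
        Set.mem_setOf_eq, Set.mem_iInter, Set.mem_compl_iff, Set.mem_Iio]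
      by_cases h : ∃ i, P n x i
      · simp only [hgdef, dif_pos h, Nat.find_eq_iff h]
        constructor
        · rintro ⟨h1, h2⟩
          exact Or.inl ⟨h1, h2⟩
        · rintro (⟨h1, h2⟩ | ⟨hj, hall⟩)
          · exact ⟨h1, h2⟩
          · obtain ⟨i, hi⟩ := h
            exact absurd hi (hall i)
      · simp only [hgdef, dif_neg h]
        constructor
        · intro h0
          exact Or.inr ⟨h0.symm, fun i hi => h ⟨i, hi⟩⟩
        · rintro (⟨h1, _⟩ | ⟨hj, _⟩)
          · exact absurd ⟨j, h1⟩ h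
          · exact hj.symm
    rw [heq]
    apply MeasurableSet.union
    · exact (hPmeas n j).inter (MeasurableSet.biInter (Set.to_countable _)
        (fun i _ => (hPmeas n i).compl))
    · exact (MeasurableSet.const _).inter (MeasurableSet.iInter fun i => (hPmeas n i).compl)
  set F : ℕ → X → (X →L[ℝ] Y) :=
    fun n => A.piecewise (fun x => d (Nat.unpair (g n x)).1) (fun _ => 0) with hFdef
  set G : X → (X →L[ℝ] Y) := A.piecewise D (fun _ => 0) with hGdef
  have hFmeas : ∀ n, Measurable (F n) := fun n =>
    Measurable.piecewise hAmeas
      ((measurable_from_top (f := fun j : ℕ => d (Nat.unpair j).1)).comp (hgmeas n))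
      measurable_const
  have htend : ∀ x, Tendsto (fun n => F n x) atTop (𝓝 (G x)) := by
    intro x
    by_cases hx : x ∈ A
    · have hGx : G x = D x := Set.piecewise_eq_of_mem _ _ _ hx
      have hdiff : StrongDiffAt T x (D x) := hD x hx
      rw [hGx]
      rw [tendsto_iff_norm_sub_tendsto_zero]
      apply squeeze_zero (fun n => norm_nonneg _) (g := fun n : ℕ => 1 / (n + 1 : ℝ))
      · intro n
        have hFx : F n x = d (Nat.unpair (g n x)).1 := Set.piecewise_eq_of_mem _ _ _ hx
        rw [hFx]
        have hex : ∃ j, P n x j := hexists x hx n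
        have hPfind : P n x (g n x) := by
          simp only [hgdef, dif_pos hex]
          exact Nat.find_spec hex
        exact norm_sub_le_of_mem_SDSet T hne (by positivity) (by positivity) hPfind hdiff
      · exact tendsto_one_div_add_atTop_nhds_zero_nat
    · have hGx : G x = 0 := Set.piecewise_eq_of_notMem _ _ _ hx
      have hFx : ∀ n, F n x = 0 := fun n => Set.piecewise_eq_of_notMem _ _ _ hx
      rw [hGx]
      simp only [hFx]
      exact tendsto_const_nhds
  have hGmeas : Measurable G :=
    measurable_of_tendsto_metrizable' atTop hFmeas (tendsto_pi_nhds.2 htend)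
  have hset : {x : X | (∃ L : X →L[ℝ] Y, StrongDiffAt T x L) ∧ D x ∈ B} = A ∩ G ⁻¹' B := by
    ext x
    simp only [Set.mem_setOf_eq, Set.mem_inter_iff, Set.mem_preimage]
    constructor
    · rintro ⟨hx, hDx⟩
      have hxA : x ∈ A := hx
      refine ⟨hxA, ?_⟩
      rw [hGdef, Set.piecewise_eq_of_mem _ _ _ hxA]
      exact hDx
    · rintro ⟨hxA, hGx⟩
      refine ⟨hxA, ?_⟩
      rwa [hGdef, Set.piecewise_eq_of_mem _ _ _ hxA] at hGx
  rw [hset]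
  exact hAmeas.inter (hGmeas hB)
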